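/- Let P_i(k) := e^{-rT}·∫_ℝ (k − S_T(x))⁺ dγ(x) for k ∈ ℝ and let P := P_i(K). For any v with v ≥ P, the seller's and buyer's minimal risk exposures under the risk function R₁(x) = x⁺ coincide, i.e. ∫_ℝ ((K − S_T(x))⁺ − v·e^{rT})⁺ dγ(x) = e^{rT}(v − P), if and only if v = P + P_i(K − v·e^{rT}). (Equal-risk price formula for a European put option under a short selling ban with risk function x⁺.) -/

import Mathlib

open MeasureTheory ProbabilityTheory

/-- Equal-risk price formula for a European put option under a short selling ban
with risk function `R₁(x) = x⁺`. -/
theorem equal_risk_put_price_R1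
    (S K σ T r : ℝ) (hS : 0 < S) (hK : 0 < K) (hσ : 0 < σ) (hT : 0 < T)
    (ST : ℝ → ℝ)
    (hST : ∀ x, ST x = S * Real.exp ((r - σ ^ 2 / 2) * T + σ * Real.sqrt T * x))
    (Pi : ℝ → ℝ)
    (hPi : ∀ k, Pi k = Real.exp (-r * T) * ∫ x, max (k - ST x) 0 ∂(gaussianReal 0 1))
    (P : ℝ) (hP : P = Pi K)
    (v : ℝ) (hvP : P ≤ v) :
    (∫ x, max (max (K - ST x) 0 - v * Real.exp (r * T)) 0 ∂(gaussianReal 0 1)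
        = Real.exp (r * T) * (v - P))
      ↔ v = P + Pi (K - v * Real.exp (r * T)) := by
  have hP0 : 0 ≤ P := by
    rw [hP, hPi]
    exact mul_nonneg (Real.exp_pos _).le
      (integral_nonneg fun x => le_max_right _ _)
  have hc : 0 ≤ v * Real.exp (r * T) :=
    mul_nonneg (hP0.trans hvP) (Real.exp_pos _).le
  have hfun : ∀ x, max (max (K - ST x) 0 - v * Real.exp (r * T)) 0
      = max ((K - v * Real.exp (r * T)) - ST x) 0 := by
    intro x
    rcases le_total (K - ST x) 0 with h | h
    · rw [max_eq_right h, zero_sub, max_eq_right (neg_nonpos.mpr hc),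
        max_eq_right (by linarith)]
    · rw [max_eq_left h]
      congr 1; ring
  simp only [hfun, hPi]
  have hE : Real.exp (r * T) ≠ 0 := (Real.exp_pos _).ne'
  rw [neg_mul, Real.exp_neg]
  constructor
  · intro h; rw [h]; field_simp; ring
  · intro h; field_simp at h; linarith
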